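/- For integers m ≥ l ≥ 0, ν₂(A_{l,m}) = ν₂((m+1-l)·(m+2-l)···(m+l)) + l; equivalently ν₂(A_{l,m}) = l + Σ_{j=-l+1}^{l} ν₂(m+j). -/

import Mathlib

open Finset

/-- The rational expression `A_{l,m} = (l! m! / 2^(m-l)) Σ_{k=l}^m 2^k C(2m-2k,m-k) C(m+k,m) C(k,l)`. -/
def Aq (l m : ℕ) : ℚ :=
  ((l.factorial * m.factorial : ℕ) : ℚ) / 2 ^ (m - l) *
    ∑ k ∈ Finset.Icc l m,
      (2 : ℚ) ^ k * ((2 * m - 2 * k).choose (m - k)) * ((m + k).choose m) * (k.choose l)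

section Aux

open Nat

namespace NuAAux

lemma cv (a b : ℕ) :
    padicValNat 2 ((a + b).choose a) + padicValNat 2 a.factorial + padicValNat 2 b.factorial
      = padicValNat 2 (a + b).factorial := by
  have h : (a + b).choose a * a.factorial * b.factorial = (a + b).factorial := by
    have := Nat.choose_mul_factorial_mul_factorial (Nat.le_add_right a b)
    simpa using this
  rw [← h, padicValNat.mul (Nat.mul_ne_zero (Nat.choose_pos (Nat.le_add_right a b)).ne'
      a.factorial_ne_zero) b.factorial_ne_zero,
    padicValNat.mul (Nat.choose_pos (Nat.le_add_right a b)).ne' a.factorial_ne_zero]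

lemma F2 (n : ℕ) : padicValNat 2 (n + n).factorial = padicValNat 2 n.factorial + n := by
  have := padicValNat_factorial_mul (p := 2) n
  rwa [two_mul] at this

/-- the k-th term of the Boros–Moll sum. -/
def t (l m k : ℕ) : ℕ :=
  2 ^ k * (2 * m - 2 * k).choose (m - k) * (m + k).choose m * k.choose l

lemma t_pos {l m k : ℕ} (hlk : l ≤ k) (hkm : k ≤ m) : 0 < t l m k := by
  refine Nat.mul_pos (Nat.mul_pos (Nat.mul_pos (pow_pos (by norm_num) k)
    (Nat.choose_pos (by omega))) (Nat.choose_pos (by omega))) (Nat.choose_pos hlk)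

lemma vt {l m k : ℕ} (hlk : l ≤ k) (hkm : k ≤ m) :
    padicValNat 2 (t l m k)
      = k + padicValNat 2 ((2 * m - 2 * k).choose (m - k))
        + padicValNat 2 ((m + k).choose m) + padicValNat 2 (k.choose l) := by
  have h1 : (2 * m - 2 * k).choose (m - k) ≠ 0 := (Nat.choose_pos (by omega)).ne'
  have h2 : (m + k).choose m ≠ 0 := (Nat.choose_pos (by omega)).ne'
  have h3 : k.choose l ≠ 0 := (Nat.choose_pos hlk).ne'
  have h0 : (2:ℕ) ^ k ≠ 0 := by positivity
  rw [t, padicValNat.mul (Nat.mul_ne_zero (Nat.mul_ne_zero h0 h1) h2) h3,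
    padicValNat.mul (Nat.mul_ne_zero h0 h1) h2,
    padicValNat.mul h0 h1,
    padicValNat.prime_pow]

lemma tk_ge {l m k : ℕ} (hlk : l < k) (hkm : k ≤ m) :
    padicValNat 2 (t l m l) + 1 ≤ padicValNat 2 (t l m k) := by
  set d := k - l with hd
  have hk : k = l + d := by omega
  have hd1 : 1 ≤ d := by omega
  -- valuation of the two terms
  have hvk := vt (le_of_lt hlk) hkm
  have hvl := vt (le_refl l) (le_trans (le_of_lt hlk) hkm)
  have e1 : 2 * m - 2 * k = (m - k) + (m - k) := by omega
  have e1l : 2 * m - 2 * l = (m - l) + (m - l) := by omega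
  rw [e1] at hvk
  rw [e1l, Nat.choose_self, padicValNat.one] at hvl
  have hcv1 := cv (m - k) (m - k)
  have hF2k := F2 (m - k)
  have hcv2 := cv m k
  have hcv3 := cv l d
  rw [← hk] at hcv3
  have hcv1l := cv (m - l) (m - l)
  have hF2l := F2 (m - l)
  have hcv2l := cv m l
  have b1 := cv d (m - k)
  have e4 : d + (m - k) = m - l := by omega
  rw [e4] at b1
  have b2 := cv d (m + l)
  have e5 : d + (m + l) = m + k := by omega
  rw [e5] at b2
  have hstrict : 1 ≤ padicValNat 2 ((m - l).choose d) + padicValNat 2 ((m + k).choose d)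
      + padicValNat 2 d.factorial := by
    rcases eq_or_lt_of_le hd1 with h1 | h2
    · -- d = 1
      rw [← h1, Nat.choose_one_right, Nat.choose_one_right]
      have hpar : 2 ∣ (m - l) ∨ 2 ∣ (m + k) := by omega
      rcases hpar with hp | hp
      · have := one_le_padicValNat_of_dvd (p := 2) (n := m - l) (by omega) hp
        omega
      · have := one_le_padicValNat_of_dvd (p := 2) (n := m + k) (by omega) hp
        omega
    · have h2d : 2 ∣ d.factorial := Nat.dvd_factorial (by norm_num) h2
      have := one_le_padicValNat_of_dvd (p := 2) (n := d.factorial) d.factorial_ne_zero h2d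
      omega
  omega


lemma vS {l m : ℕ} (hl : l ≤ m) :
    padicValNat 2 (∑ k ∈ Finset.Icc l m, t l m k) = padicValNat 2 (t l m l) := by
  set v := padicValNat 2 (t l m l) with hv
  have hsplit : Finset.Icc l m = insert l (Finset.Icc (l + 1) m) := by
    ext x; simp only [Finset.mem_Icc, Finset.mem_insert]; omega
  have hnot : l ∉ Finset.Icc (l + 1) m := by simp
  rw [hsplit, Finset.sum_insert hnot]
  set R := ∑ k ∈ Finset.Icc (l + 1) m, t l m k with hR
  have htl : t l m l ≠ 0 := (t_pos le_rfl hl).ne'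
  have hdvdR : 2 ^ (v + 1) ∣ R := by
    apply Finset.dvd_sum
    intro k hk
    simp only [Finset.mem_Icc] at hk
    have h1 := tk_ge (l := l) (m := m) (k := k) (by omega) hk.2
    exact (padicValNat_dvd_iff_le (t_pos (by omega) hk.2).ne').mpr (by omega)
  have hdvd : 2 ^ v ∣ t l m l + R :=
    dvd_add pow_padicValNat_dvd ((pow_dvd_pow 2 (Nat.le_succ v)).trans hdvdR)
  have hS0 : t l m l + R ≠ 0 := by
    have := t_pos (le_refl l) hl; omega
  have hndvd : ¬ 2 ^ (v + 1) ∣ t l m l + R := by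
    intro h
    have h2 := Nat.dvd_sub h hdvdR
    rw [Nat.add_sub_cancel] at h2
    exact pow_succ_padicValNat_not_dvd htl h2
  have hle : v ≤ padicValNat 2 (t l m l + R) := (padicValNat_dvd_iff_le hS0).mp hdvd
  have hge : padicValNat 2 (t l m l + R) ≤ v := by
    by_contra hcon
    exact hndvd ((padicValNat_dvd_iff_le hS0).mpr (by omega))
  omega

end NuAAux

end Aux

theorem nu_A_pochhammer (l m : ℕ) (hl : l ≤ m) :
    padicValRat 2 (Aq l m)
        = (padicValNat 2 (∏ j ∈ Finset.range (2 * l), (m + 1 - l + j)) : ℤ) + l ∧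
      padicValRat 2 (Aq l m)
        = (l : ℤ) + ∑ j ∈ Finset.range (2 * l), (padicValNat 2 (m + 1 - l + j) : ℤ) := by
  set Sn := ∑ k ∈ Finset.Icc l m, NuAAux.t l m k with hSn
  have hmem : l ∈ Finset.Icc l m := by simp [Finset.mem_Icc]; omega
  have hSpos : 0 < Sn := by
    have h1 : NuAAux.t l m l ≤ Sn :=
      Finset.single_le_sum (f := fun k => NuAAux.t l m k) (fun i _ => Nat.zero_le _) hmem
    have := NuAAux.t_pos (le_refl l) hl
    omega
  have hAq : Aq l m = ((l.factorial * m.factorial * Sn : ℕ) : ℚ) / 2 ^ (m - l) := by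
    rw [Aq]
    have hsum : (∑ k ∈ Finset.Icc l m,
        (2 : ℚ) ^ k * ((2 * m - 2 * k).choose (m - k)) * ((m + k).choose m) * (k.choose l))
          = (Sn : ℚ) := by
      rw [hSn, Nat.cast_sum]
      refine Finset.sum_congr rfl fun k _ => ?_
      rw [NuAAux.t]
      push_cast
      ring
    rw [hsum]
    push_cast
    ring
  have hNne : ((l.factorial * m.factorial * Sn : ℕ) : ℚ) ≠ 0 := by
    rw [Nat.cast_ne_zero]
    exact Nat.mul_ne_zero (Nat.mul_ne_zero l.factorial_ne_zero m.factorial_ne_zero) hSpos.ne'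
  have h2ne : ((2 : ℚ) ^ (m - l)) ≠ 0 := by positivity
  have hval : padicValRat 2 (Aq l m)
      = (padicValNat 2 (l.factorial * m.factorial * Sn) : ℤ) - ((m - l : ℕ) : ℤ) := by
    rw [hAq, padicValRat.div hNne h2ne, padicValRat.of_nat]
    congr 1
    have h2c : ((2 : ℚ) ^ (m - l)) = ((2 ^ (m - l) : ℕ) : ℚ) := by push_cast; ring
    rw [h2c, padicValRat.of_nat, padicValNat.prime_pow]
  have hvN : padicValNat 2 (l.factorial * m.factorial * Sn)
      = padicValNat 2 l.factorial + padicValNat 2 m.factorial + padicValNat 2 Sn := by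
    rw [padicValNat.mul (Nat.mul_ne_zero l.factorial_ne_zero m.factorial_ne_zero) hSpos.ne',
      padicValNat.mul l.factorial_ne_zero m.factorial_ne_zero]
  have hvS : padicValNat 2 Sn = padicValNat 2 (NuAAux.t l m l) := NuAAux.vS hl
  have hvtl := NuAAux.vt (le_refl l) hl
  have e1l : 2 * m - 2 * l = (m - l) + (m - l) := by omega
  rw [e1l, Nat.choose_self, padicValNat.one] at hvtl
  have hcv1 := NuAAux.cv (m - l) (m - l)
  have hF2 := NuAAux.F2 (m - l)
  have hcv2 := NuAAux.cv m l
  have hprodeq : (m - l).factorial * (∏ j ∈ Finset.range (2 * l), (m + 1 - l + j))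
      = (m + l).factorial := by
    have h1 : (∏ j ∈ Finset.range (2 * l), (m + 1 - l + j))
        = ∏ j ∈ Finset.range (2 * l), ((m - l) + 1 + j) :=
      Finset.prod_congr rfl fun j _ => by omega
    rw [h1]
    have key : ∀ (n a : ℕ), a.factorial * ∏ j ∈ Finset.range n, (a + 1 + j)
        = (a + n).factorial := by
      intro n a
      induction n with
      | zero => simp
      | succ n ih =>
        rw [Finset.prod_range_succ, ← mul_assoc, ih]
        rw [show a + (n + 1) = (a + n) + 1 from by omega, Nat.factorial_succ]
        ring
    rw [key]
    congr 1
    omega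
  have hprodne : (∏ j ∈ Finset.range (2 * l), (m + 1 - l + j)) ≠ 0 := by
    rw [Finset.prod_ne_zero_iff]
    intro j _
    omega
  have hvprod : padicValNat 2 (m - l).factorial
      + padicValNat 2 (∏ j ∈ Finset.range (2 * l), (m + 1 - l + j))
      = padicValNat 2 (m + l).factorial := by
    rw [← padicValNat.mul (m - l).factorial_ne_zero hprodne, hprodeq]
  have goal1 : padicValRat 2 (Aq l m)
      = (padicValNat 2 (∏ j ∈ Finset.range (2 * l), (m + 1 - l + j)) : ℤ) + l := by
    rw [hval, hvN]
    omega
  refine ⟨goal1, ?_⟩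
  have hnat : padicValNat 2 (∏ j ∈ Finset.range (2 * l), (m + 1 - l + j))
      = ∑ j ∈ Finset.range (2 * l), padicValNat 2 (m + 1 - l + j) := by
    rw [← Nat.factorization_def _ Nat.prime_two,
      Nat.factorization_prod (fun j _ => by omega : ∀ j ∈ Finset.range (2 * l), m + 1 - l + j ≠ 0)]
    rw [Finset.sum_apply']
    exact Finset.sum_congr rfl fun j _ => Nat.factorization_def _ Nat.prime_two
  rw [goal1, hnat]
  push_cast
  ring
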